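/- Let L be a level datum such that L is empty, or the largest level of L is < 1, or the largest level of L is > 2 (i.e. L is a locally minimal level datum at infinity). Then B_L = 2 if and only if L = {5/2}. -/

import Mathlib

open Finset

/-- The ramification order of a level datum: the least common denominator of its
elements, i.e. the lcm of the denominators (`ram ∅ = 1`). -/
def ram (L : Finset ℚ) : ℕ := L.lcm Rat.den

/-- The least common denominator `d` of the "initial segment" of `L` consisting of the
elements `≥ k` (the elements come in decreasing order `k₀ > k₁ > ⋯`). -/
def segLcm (L : Finset ℚ) (k : ℚ) : ℕ := (L.filter (fun x => k ≤ x)).lcm Rat.den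

/-- A level datum: a finite set of positive rationals such that the least common
denominators `d₀, d₁, …` of the initial segments (for the decreasing order) are all `≥ 2`
and form a strictly increasing sequence.  (Since the `d_j` are increasing, requiring
`d_j ≥ 2` for all `j` is equivalent to `d₀ ≥ 2`, i.e. to the largest element not being
an integer.) -/
def IsLevelDatum (L : Finset ℚ) : Prop :=
  (∀ k ∈ L, 0 < k) ∧
  (∀ k ∈ L, 2 ≤ segLcm L k) ∧
  (∀ k ∈ L, ∀ k' ∈ L, k' < k → segLcm L k < segLcm L k')

/-- The largest level of `L` (junk value `0` for `L = ∅`). -/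
def maxLevel (L : Finset ℚ) : ℚ := WithBot.unbotD 0 L.max

/-- The numerator `s(k) := k · Ram(L) ∈ ℤ` of a level `k` of `L`. -/
def numer (L : Finset ℚ) (k : ℚ) : ℤ := (k * (ram L : ℚ)).num

/-- `σ := k₀ · Ram(L) ∈ ℤ`, the numerator of the largest level. -/
def sigma0 (L : Finset ℚ) : ℤ := numer L (maxLevel L)

/-- `gcd(s(x) for x ∈ s, Ram L)` : the gcd of `Ram L` together with the numerators of the
elements of a subset `s ⊆ L`. -/
def gSeg (L : Finset ℚ) (s : Finset ℚ) : ℕ :=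
  Nat.gcd (ram L) (s.gcd (fun x => (numer L x).natAbs))

/-- The quantity
`B_L = (r − (s₀,r))·s₀ + Σᵢ ((s₀,…,s_{i−1},r) − (s₀,…,s_i,r))·s_i − r² + 1`
(`B_∅ = 0`), equal to the dimension of the elementary wild character variety. -/
def B (L : Finset ℚ) : ℤ :=
  (∑ k ∈ L, ((gSeg L (L.filter (fun x => k < x)) : ℤ)
      - (gSeg L (L.filter (fun x => k ≤ x)) : ℤ)) * numer L k)
    - (ram L : ℤ) ^ 2 + 1

/-- A level datum is locally minimal at infinity if it is empty, or its largest level is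
`< 1` or `> 2`. -/
def LocallyMinimal (L : Finset ℚ) : Prop :=
  L = ∅ ∨ maxLevel L < 1 ∨ 2 < maxLevel L

/-- Rescaling of a level datum by a factor `c`, removing the integer elements. -/
def rescale (L : Finset ℚ) (c : ℚ) : Finset ℚ :=
  (L.image (fun k => c * k)).filter (fun x => x.den ≠ 1)

/-- The local simplification map `S_∞` on level data: if the largest level `k₀` satisfies
`1 < k₀ < 2`, rescale all the levels by `ρ/(σ−ρ)` (where `ρ = Ram L`, `σ = k₀·ρ`) and
remove the integer levels; otherwise do nothing. -/
def Sinf (L : Finset ℚ) : Finset ℚ :=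
  if 1 < maxLevel L ∧ maxLevel L < 2 then
    rescale L ((ram L : ℚ) / ((sigma0 L : ℚ) - (ram L : ℚ)))
  else L

/- ### auxiliary lemmas -/

theorem my_gcd3 (r a b : ℕ) : Nat.gcd r (Nat.gcd a b) = Nat.gcd (Nat.gcd r a) (Nat.gcd r b) := by
  apply Nat.dvd_antisymm
  · exact Nat.dvd_gcd (Nat.dvd_gcd (Nat.gcd_dvd_left _ _) ((Nat.gcd_dvd_right _ _).trans (Nat.gcd_dvd_left _ _)))
      (Nat.dvd_gcd (Nat.gcd_dvd_left _ _) ((Nat.gcd_dvd_right _ _).trans (Nat.gcd_dvd_right _ _)))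
  · exact Nat.dvd_gcd ((Nat.gcd_dvd_left _ _).trans (Nat.gcd_dvd_left _ _))
      (Nat.dvd_gcd ((Nat.gcd_dvd_left _ _).trans (Nat.gcd_dvd_right _ _)) ((Nat.gcd_dvd_right _ _).trans (Nat.gcd_dvd_right _ _)))

theorem my_lcm_div_gcd (r a b : ℕ) (hr : r ≠ 0) (ha : a ∣ r) (hb : b ∣ r) :
    Nat.lcm (r / a) (r / b) * Nat.gcd a b = r := by
  have ha0 : a ≠ 0 := fun h => hr (by simpa [h] using ha)
  have hg : Nat.gcd a b ∣ r := (Nat.gcd_dvd_left a b).trans ha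
  have hg0 : 0 < Nat.gcd a b := Nat.pos_of_ne_zero fun h => ha0 (Nat.eq_zero_of_gcd_eq_zero_left h)
  have key : ∀ c : ℕ, c ∣ r → r / c * c = r := fun c hc => Nat.div_mul_cancel hc
  have hdra : r / a ∣ r / Nat.gcd a b := by
    refine ⟨a / Nat.gcd a b, (Nat.eq_of_mul_eq_mul_right hg0 ?_).symm⟩
    rw [Nat.mul_assoc, Nat.div_mul_cancel (Nat.gcd_dvd_left a b), key a ha, key _ hg]
  have hdrb : r / b ∣ r / Nat.gcd a b := by
    refine ⟨b / Nat.gcd a b, (Nat.eq_of_mul_eq_mul_right hg0 ?_).symm⟩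
    rw [Nat.mul_assoc, Nat.div_mul_cancel (Nat.gcd_dvd_right a b), key b hb, key _ hg]
  have h1 : Nat.lcm (r / a) (r / b) ∣ r / Nat.gcd a b := Nat.lcm_dvd hdra hdrb
  have h2 : r / Nat.gcd a b ∣ Nat.lcm (r / a) (r / b) := by
    have hdva : r ∣ Nat.lcm (r / a) (r / b) * a := by
      obtain ⟨c, hc⟩ := Nat.dvd_lcm_left (r / a) (r / b)
      exact ⟨c, by rw [hc, Nat.mul_right_comm, key a ha]⟩
    have hdvb : r ∣ Nat.lcm (r / a) (r / b) * b := by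
      obtain ⟨c, hc⟩ := Nat.dvd_lcm_right (r / a) (r / b)
      exact ⟨c, by rw [hc, Nat.mul_right_comm, key b hb]⟩
    have hdvg : r ∣ Nat.lcm (r / a) (r / b) * Nat.gcd a b := by
      rw [← Nat.gcd_mul_left]
      exact Nat.dvd_gcd hdva hdvb
    obtain ⟨c, hc⟩ := hdvg
    refine ⟨c, (Nat.eq_of_mul_eq_mul_right hg0 ?_).symm⟩
    rw [Nat.mul_right_comm, key _ hg, ← hc]
  rw [Nat.dvd_antisymm h1 h2, key _ hg]

theorem ram_pos (L : Finset ℚ) : 0 < ram L := by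
  rcases Nat.eq_zero_or_pos (ram L) with h | h
  · exfalso
    obtain ⟨x, -, hx⟩ := Finset.lcm_eq_zero_iff.mp h
    exact x.den_nz hx
  · exact h

theorem den_dvd_ram {L : Finset ℚ} {x : ℚ} (hx : x ∈ L) : x.den ∣ ram L :=
  Finset.dvd_lcm hx

theorem numer_cast {L : Finset ℚ} {x : ℚ} (hx : x ∈ L) :
    ((numer L x : ℤ) : ℚ) = x * (ram L : ℚ) := by
  have hdvd := den_dvd_ram hx
  have h1 : ((ram L / x.den : ℕ) : ℚ) * (x.den : ℚ) = (ram L : ℚ) := by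
    rw [← Nat.cast_mul, Nat.div_mul_cancel hdvd]
  have h2 : x * (ram L : ℚ) = ((x.num * (ram L / x.den : ℕ) : ℤ) : ℚ) := by
    rw [← h1, ← mul_assoc, mul_comm x, mul_assoc, Rat.mul_den_eq_num,
      Int.cast_mul, Int.cast_natCast, mul_comm]
  rw [show numer L x = x.num * (ram L / x.den : ℕ) by
    unfold numer; rw [h2, Rat.num_intCast], h2]

theorem numer_eq {L : Finset ℚ} {x : ℚ} (hx : x ∈ L) :
    numer L x = x.num * ((ram L / x.den : ℕ) : ℤ) := by
  have hdvd := den_dvd_ram hx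
  have h1 : ((ram L / x.den : ℕ) : ℚ) * (x.den : ℚ) = (ram L : ℚ) := by
    rw [← Nat.cast_mul, Nat.div_mul_cancel hdvd]
  have h2 : x * (ram L : ℚ) = ((x.num * (ram L / x.den : ℕ) : ℤ) : ℚ) := by
    rw [← h1, ← mul_assoc, mul_comm x, mul_assoc, Rat.mul_den_eq_num,
      Int.cast_mul, Int.cast_natCast, mul_comm]
  unfold numer
  rw [h2, Rat.num_intCast]

theorem gcd_ram_numer {L : Finset ℚ} {x : ℚ} (hx : x ∈ L) :
    Nat.gcd (ram L) (numer L x).natAbs = ram L / x.den := by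
  have hdvd := den_dvd_ram hx
  have h1 : (numer L x).natAbs = x.num.natAbs * (ram L / x.den) := by
    rw [numer_eq hx, Int.natAbs_mul, Int.natAbs_natCast]
  obtain ⟨m, hm⟩ := hdvd
  have hd0 : 0 < x.den := x.pos
  rw [h1, hm, Nat.mul_div_cancel_left _ hd0, Nat.gcd_mul_right,
    show Nat.gcd x.den x.num.natAbs = 1 from Nat.Coprime.gcd_eq_one (Nat.coprime_comm.mp x.reduced),
    Nat.one_mul]

theorem gSeg_pos' (L : Finset ℚ) (s : Finset ℚ) : 0 < gSeg L s :=
  Nat.gcd_pos_of_pos_left _ (ram_pos L)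

theorem lcm_mul_gSeg (L : Finset ℚ) (S : Finset ℚ) (hS : S ⊆ L) :
    S.lcm Rat.den * gSeg L S = ram L := by
  classical
  induction S using Finset.induction_on with
  | empty => simp [gSeg]
  | @insert x S hxS ih =>
    have hx : x ∈ L := hS (Finset.mem_insert_self x S)
    have hS' : S ⊆ L := fun y hy => hS (Finset.mem_insert_of_mem hy)
    have ih' := ih hS'
    have hr0 : ram L ≠ 0 := (ram_pos L).ne'
    have hG : Nat.gcd (ram L) (S.gcd fun y => (numer L y).natAbs) ∣ ram L := Nat.gcd_dvd_left _ _
    have hM : S.lcm Rat.den = ram L / gSeg L S :=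
      (Nat.div_eq_of_eq_mul_left (gSeg_pos' L S) ih'.symm).symm
    have hij : (insert x S).lcm Rat.den = Nat.lcm x.den (S.lcm Rat.den) := by
      rw [Finset.lcm_insert]; rfl
    have hgj : gSeg L (insert x S)
        = Nat.gcd (ram L / x.den) (Nat.gcd (ram L) (S.gcd fun y => (numer L y).natAbs)) := by
      unfold gSeg
      rw [Finset.gcd_insert]
      show Nat.gcd (ram L) (Nat.gcd _ _) = _
      rw [my_gcd3, gcd_ram_numer hx]
    rw [hij, hgj, hM]
    have hden : x.den = ram L / (ram L / x.den) :=
      (Nat.div_div_self (den_dvd_ram hx) hr0).symm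
    nth_rewrite 1 [hden]
    exact my_lcm_div_gcd (ram L) _ _ hr0 (Nat.div_dvd_of_dvd (den_dvd_ram hx)) hG

theorem segLcm_mul_gSeg (L : Finset ℚ) (k : ℚ) :
    segLcm L k * gSeg L (L.filter (fun x => k ≤ x)) = ram L :=
  lcm_mul_gSeg L _ (Finset.filter_subset _ _)

theorem telescope (r : ℕ) (n : ℚ → ℕ) (S : Finset ℚ) :
    ∑ k ∈ S, ((Nat.gcd r ((S.filter (fun x => k < x)).gcd n) : ℤ)
      - (Nat.gcd r ((S.filter (fun x => k ≤ x)).gcd n) : ℤ))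
      = (r : ℤ) - (Nat.gcd r (S.gcd n) : ℤ) := by
  classical
  induction S using Finset.induction_on_min with
  | empty => simp
  | insert a s ha ih =>
    have hans : a ∉ s := fun h => lt_irrefl a (ha a h)
    rw [Finset.sum_insert hans]
    have h1 : (insert a s).filter (fun x => a < x) = s := by
      rw [Finset.filter_insert]
      simp only [lt_irrefl, if_false]
      exact Finset.filter_true_of_mem ha
    have h2 : (insert a s).filter (fun x => a ≤ x) = insert a s := by
      apply Finset.filter_true_of_mem
      intro b hb
      rcases Finset.mem_insert.mp hb with h | h
      · exact le_of_eq h.symm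
      · exact (ha b h).le
    have h3 : ∀ k ∈ s, (insert a s).filter (fun x => k < x) = s.filter (fun x => k < x) := by
      intro k hk
      rw [Finset.filter_insert, if_neg (by exact not_lt.mpr (ha k hk).le)]
    have h4 : ∀ k ∈ s, (insert a s).filter (fun x => k ≤ x) = s.filter (fun x => k ≤ x) := by
      intro k hk
      rw [Finset.filter_insert, if_neg (by exact not_le.mpr (ha k hk))]
    rw [h1, h2]
    rw [Finset.sum_congr rfl (fun k hk => by rw [h3 k hk, h4 k hk])]
    rw [ih]
    ring

theorem numer_pos {L : Finset ℚ} {x : ℚ} (hx : x ∈ L) (hx0 : 0 < x) : 0 < numer L x := by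
  unfold numer
  rw [Rat.num_pos]
  exact mul_pos hx0 (by exact_mod_cast ram_pos L)

theorem filter_le_eq_insert {L : Finset ℚ} {k : ℚ} (hk : k ∈ L) :
    L.filter (fun x => k ≤ x) = insert k (L.filter (fun x => k < x)) := by
  ext x
  simp only [Finset.mem_filter, Finset.mem_insert]
  constructor
  · rintro ⟨hxL, hle⟩
    rcases eq_or_lt_of_le hle with h | h
    · exact Or.inl h.symm
    · exact Or.inr ⟨hxL, h⟩
  · rintro (rfl | ⟨hxL, hlt⟩)
    · exact ⟨hk, le_refl _⟩
    · exact ⟨hxL, hlt.le⟩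

theorem gSeg_le {L : Finset ℚ} {k : ℚ} (hk : k ∈ L) :
    gSeg L (L.filter (fun x => k ≤ x)) ≤ gSeg L (L.filter (fun x => k < x)) := by
  apply Nat.le_of_dvd (gSeg_pos' L _)
  rw [filter_le_eq_insert hk]
  unfold gSeg
  rw [Finset.gcd_insert]
  show Nat.gcd (ram L) (Nat.gcd _ _) ∣ _
  exact Nat.dvd_gcd (Nat.gcd_dvd_left _ _)
    ((Nat.gcd_dvd_right _ _).trans (Nat.gcd_dvd_right _ _))


theorem telescope' (L : Finset ℚ) :
    ∑ k ∈ L, ((gSeg L (L.filter (fun x => k < x)) : ℤ) - (gSeg L (L.filter (fun x => k ≤ x)) : ℤ))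
      = (ram L : ℤ) - (gSeg L L : ℤ) := by
  unfold gSeg
  exact telescope (ram L) (fun x => (numer L x).natAbs) L

theorem B_singleton (k : ℚ) : B {k} = ((k.den : ℤ) - 1) * k.num - (k.den : ℤ) ^ 2 + 1 := by
  have hr : ram {k} = k.den := by
    unfold ram; simp
  have hnum : numer {k} k = k.num := by
    unfold numer; rw [hr, Rat.mul_den_eq_num, Rat.num_intCast]
  have hflt : ({k} : Finset ℚ).filter (fun x => k < x) = ∅ := by
    rw [Finset.filter_singleton, if_neg (lt_irrefl k)]
  have hfle : ({k} : Finset ℚ).filter (fun x => k ≤ x) = {k} := by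
    rw [Finset.filter_singleton, if_pos (le_refl k)]
  have hg0 : gSeg {k} (∅ : Finset ℚ) = k.den := by
    unfold gSeg; rw [hr]; simp
  have hg1 : gSeg {k} ({k} : Finset ℚ) = 1 := by
    unfold gSeg
    rw [hr, Finset.gcd_singleton, hnum]
    show Nat.gcd k.den (normalize k.num.natAbs) = 1
    rw [show normalize k.num.natAbs = k.num.natAbs by simp]
    exact Nat.Coprime.gcd_eq_one (Nat.coprime_comm.mp k.reduced)
  unfold B
  rw [Finset.sum_singleton, hflt, hfle, hr, hnum, hg0, hg1]
  push_cast
  ring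

theorem five_half_den : ((5:ℚ)/2).den = 2 := by
  rw [show (5:ℚ)/2 = Rat.mk' 5 2 (by norm_num) (by norm_num) from by
    rw [Rat.mk_eq_divInt, Rat.divInt_eq_div]; norm_num]

theorem five_half_num : ((5:ℚ)/2).num = 5 := by
  rw [show (5:ℚ)/2 = Rat.mk' 5 2 (by norm_num) (by norm_num) from by
    rw [Rat.mk_eq_divInt, Rat.divInt_eq_div]; norm_num]


/-- for a locally minimal level datum at infinity, `B_L = 2 ↔ L = {5/2}`. -/
theorem stmt_4 (L : Finset ℚ) (hL : IsLevelDatum L) (hmin : LocallyMinimal L) :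
    B L = 2 ↔ L = {(5 : ℚ) / 2} := by
  obtain ⟨hpos, hseg2, hmono⟩ := hL
  have hr0 : 0 < ram L := ram_pos L
  constructor
  · intro hB
    rcases Finset.eq_empty_or_nonempty L with h0 | hne
    · exfalso
      rw [h0] at hB
      rw [show B ∅ = 0 by unfold B ram; simp] at hB
      norm_num at hB
    obtain ⟨k0, hk0L, hle⟩ := Finset.exists_max_image L id hne
    simp only [id] at hle
    have hmax : maxLevel L = k0 := by
      have h1 : L.max' hne = k0 :=
        le_antisymm (Finset.max'_le _ _ _ hle) (Finset.le_max' _ _ hk0L)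
      unfold maxLevel
      rw [← Finset.coe_max' hne, h1]
      rfl
    have hfe : L.filter (fun x => k0 < x) = ∅ :=
      Finset.filter_eq_empty_iff.mpr (fun {x} hx => not_lt.mpr (hle x hx))
    have hgtop : gSeg L (L.filter (fun x => k0 < x)) = ram L := by
      rw [hfe]; unfold gSeg; simp
    have hterm_nonneg : ∀ k ∈ L,
        0 ≤ ((gSeg L (L.filter (fun x => k < x)) : ℤ)
          - (gSeg L (L.filter (fun x => k ≤ x)) : ℤ)) * numer L k := by
      intro k hk
      apply mul_nonneg
      · have := gSeg_le hk
        have h2 : (gSeg L (L.filter fun x => k ≤ x) : ℤ)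
            ≤ (gSeg L (L.filter fun x => k < x) : ℤ) := by exact_mod_cast this
        linarith
      · exact (numer_pos hk (hpos k hk)).le
    rcases hmin with h | h | h
    · exact absurd h (Finset.nonempty_iff_ne_empty.mp hne)
    · -- maxLevel < 1 : impossible
      exfalso
      rw [hmax] at h
      have hterm_le : ∀ k ∈ L,
          ((gSeg L (L.filter (fun x => k < x)) : ℤ)
            - (gSeg L (L.filter (fun x => k ≤ x)) : ℤ)) * numer L k
          ≤ ((gSeg L (L.filter (fun x => k < x)) : ℤ)
            - (gSeg L (L.filter (fun x => k ≤ x)) : ℤ)) * ((ram L : ℤ) - 1) := by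
        intro k hk
        have hD : (0:ℤ) ≤ (gSeg L (L.filter fun x => k < x) : ℤ)
            - (gSeg L (L.filter fun x => k ≤ x) : ℤ) := by
          have := gSeg_le hk
          have h2 : (gSeg L (L.filter fun x => k ≤ x) : ℤ)
              ≤ (gSeg L (L.filter fun x => k < x) : ℤ) := by exact_mod_cast this
          linarith
        apply mul_le_mul_of_nonneg_left _ hD
        have hq : ((numer L k : ℤ) : ℚ) = k * (ram L : ℚ) := numer_cast hk
        have hk1 : k < 1 := lt_of_le_of_lt (hle k hk) h
        have hlt : ((numer L k : ℤ) : ℚ) < ((ram L : ℤ) : ℚ) := by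
          rw [hq]
          have := mul_lt_mul_of_pos_right hk1 (show (0:ℚ) < (ram L : ℚ) by exact_mod_cast hr0)
          push_cast
          linarith
        have : numer L k < (ram L : ℤ) := by exact_mod_cast hlt
        linarith
      have hsum := Finset.sum_le_sum hterm_le
      rw [← Finset.sum_mul, telescope' L] at hsum
      have hgL : (1:ℤ) ≤ (gSeg L L : ℤ) := by exact_mod_cast gSeg_pos' L L
      have hr1 : (1:ℤ) ≤ (ram L : ℤ) := by exact_mod_cast hr0
      unfold B at hB
      nlinarith [hsum, hB, hgL, hr1]
    · -- maxLevel > 2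
      rw [hmax] at h
      by_cases hsing : L = {k0}
      · -- singleton case: solve
        subst hsing
        rw [B_singleton k0] at hB
        have hden2 : 2 ≤ k0.den := by
          have h2 := hseg2 k0 hk0L
          have : segLcm {k0} k0 = k0.den := by
            unfold segLcm
            rw [show ({k0} : Finset ℚ).filter (fun x => k0 ≤ x) = {k0} by
              rw [Finset.filter_singleton, if_pos (le_refl k0)]]
            simp
          rwa [this] at h2
        have hq : (k0.num : ℚ) = k0 * (k0.den : ℚ) := (Rat.mul_den_eq_num k0).symm
        have hnum_lb : 2 * (k0.den : ℤ) < k0.num := by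
          have hdpos : (0:ℚ) < (k0.den : ℚ) := by exact_mod_cast k0.pos
          have : 2 * ((k0.den : ℤ) : ℚ) < ((k0.num : ℤ) : ℚ) := by
            push_cast
            rw [hq]
            nlinarith [mul_lt_mul_of_pos_right h hdpos]
          exact_mod_cast this
        have hd2 : (k0.den : ℤ) = 2 := by nlinarith [hB, hnum_lb, hden2,
          (show (2:ℤ) ≤ (k0.den : ℤ) by exact_mod_cast hden2)]
        have hn5 : k0.num = 5 := by
          rw [hd2] at hB; linarith
        have hdq : ((k0.den : ℚ)) = 2 := by
          have : k0.den = 2 := by exact_mod_cast hd2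
          rw [this]; norm_num
        have hk0 : k0 = (5:ℚ)/2 := by
          rw [← Rat.num_div_den k0, hn5, hdq]
          norm_num
        rw [hk0]
      · -- at least two elements: impossible
        exfalso
        obtain ⟨k1, hk1L, hk1ne⟩ : ∃ k1 ∈ L, k1 ≠ k0 := by
          by_contra hc
          push_neg at hc
          exact hsing (Finset.eq_singleton_iff_unique_mem.mpr ⟨hk0L, hc⟩)
        have hk1lt : k1 < k0 := lt_of_le_of_ne (hle k1 hk1L) hk1ne
        have hmlt := hmono k0 hk0L k1 hk1L hk1lt
        have hp0 := segLcm_mul_gSeg L k0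
        have hp1 := segLcm_mul_gSeg L k1
        set g0 := gSeg L (L.filter (fun x => k0 ≤ x)) with hg0def
        set g1 := gSeg L (L.filter (fun x => k1 ≤ x)) with hg1def
        have hg0pos : 0 < g0 := gSeg_pos' L _
        have hg1pos : 0 < g1 := gSeg_pos' L _
        have hglt : g1 < g0 := by
          by_contra hcon
          push_neg at hcon
          have h1 : segLcm L k0 * g0 < segLcm L k1 * g1 :=
            Nat.mul_lt_mul_of_lt_of_le hmlt hcon hg1pos
          omega
        have hg2 : 2 ≤ g0 := by omega
        have h2g : 2 * g0 ≤ ram L := by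
          have := Nat.mul_le_mul_right g0 (hseg2 k0 hk0L)
          omega
        have hs0 : 2 * (ram L : ℤ) + 1 ≤ numer L k0 := by
          have hq := numer_cast hk0L
          have hrpos : (0:ℚ) < (ram L : ℚ) := by exact_mod_cast hr0
          have : 2 * ((ram L : ℤ) : ℚ) < ((numer L k0 : ℤ) : ℚ) := by
            rw [hq]
            push_cast
            nlinarith [mul_lt_mul_of_pos_right h hrpos]
          have : 2 * (ram L : ℤ) < numer L k0 := by exact_mod_cast this
          linarith
        have hsingle := Finset.single_le_sum hterm_nonneg hk0L
        rw [hgtop] at hsingle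
        unfold B at hB
        have hr1 : (2:ℤ) * g0 ≤ (ram L : ℤ) := by exact_mod_cast h2g
        have hg2' : (2:ℤ) ≤ (g0 : ℤ) := by exact_mod_cast hg2
        nlinarith [hsingle, hB, hs0, hr1, hg2',
          mul_le_mul_of_nonneg_left hs0 (show (0:ℤ) ≤ (ram L : ℤ) - g0 by linarith)]
  · intro h
    subst h
    rw [B_singleton, five_half_den, five_half_num]
    norm_num
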